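/- Let a ≥ 0, c′ ≥ 0, H₁ ≥ 0, H₂ ≥ 0, λ̂ > λ > 0, γ > β > 0, and t_k ≥ 0, define H₃ = c′·(H₁·exp((λ−λ̂)·t_k)/(a+λ̂) + H₂/(a+λ)), and set ε = ln((γ + H₃)/(β + H₃))/(a + λ̂). Let ẽ : ℝ → ℝⁿ be differentiable on [t_k, t_k + ε] with ‖ẽ(t_k)‖ ≤ β·exp(−λ·t_k) and ‖ẽ′(t)‖ ≤ a·‖ẽ(t)‖ + c′·(H₁·exp(−λ̂·t) + H₂·exp(−λ·t)) for all t ∈ [t_k, t_k + ε]. Then ‖ẽ(t)‖ ≤ γ·exp(−λ·t) for all t ∈ [t_k, t_k + ε]; that is, for any constant communication delay d ∈ [0, ε] the delayed model error remains below the relaxed threshold γ·exp(−λ·t) on the delay interval following each event. -/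

import Mathlib

private lemma expDeriv1 (c d t : ℝ) :
    HasDerivAt (fun t => Real.exp (c * t - d)) (c * Real.exp (c * t - d)) t := by
  have h : HasDerivAt (fun t : ℝ => c * t - d) c t := by
    simpa using ((hasDerivAt_id t).const_mul c).sub_const d
  simpa [mul_comm] using h.exp

private lemma expDeriv2 (c t : ℝ) :
    HasDerivAt (fun t => Real.exp (-(c * t))) (-c * Real.exp (-(c * t))) t := by
  have h : HasDerivAt (fun t : ℝ => -(c * t)) (-c) t := by
    exact (((hasDerivAt_id t).const_mul c).neg).congr_deriv (by ring)
  simpa [mul_comm] using h.exp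

set_option maxHeartbeats 2000000 in
/-- Admissible delay: with `H₃ = c′(H₁ e^{(λ-λ̂)t_k}/(a+λ̂) + H₂/(a+λ))` and
`ε = ln((γ+H₃)/(β+H₃))/(a+λ̂)`, if the auxiliary delayed-model error `ẽ` satisfies
`‖ẽ(t_k)‖ ≤ β e^{-λ t_k}` and `‖ẽ′(t)‖ ≤ a‖ẽ(t)‖ + c′(H₁ e^{-λ̂ t} + H₂ e^{-λ t})` on
`[t_k, t_k + ε]`, then `‖ẽ(t)‖ ≤ γ e^{-λ t}` for all `t ∈ [t_k, t_k + ε]`: the delayed model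
error remains below the relaxed threshold `γ e^{-λ t}` for any delay `d ∈ [0, ε]`. -/
theorem stmt14 (n : ℕ) (hn : 0 < n) (a c' H₁ H₂ lamhat lam γ β tk : ℝ)
    (ha : 0 ≤ a) (hc' : 0 ≤ c') (hH₁ : 0 ≤ H₁) (hH₂ : 0 ≤ H₂)
    (hlam : 0 < lam) (hlamlt : lam < lamhat) (hβ : 0 < β) (hγβ : β < γ) (htk : 0 ≤ tk)
    (H₃ : ℝ)
    (hH₃def : H₃ = c' * (H₁ * Real.exp ((lam - lamhat) * tk) / (a + lamhat) + H₂ / (a + lam)))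
    (ε : ℝ) (hεdef : ε = Real.log ((γ + H₃) / (β + H₃)) / (a + lamhat))
    (e e' : ℝ → EuclideanSpace ℝ (Fin n))
    (hderiv : ∀ t ∈ Set.Icc tk (tk + ε), HasDerivWithinAt e (e' t) (Set.Icc tk (tk + ε)) t)
    (h0 : ‖e tk‖ ≤ β * Real.exp (-(lam * tk)))
    (hbnd : ∀ t ∈ Set.Icc tk (tk + ε),
      ‖e' t‖ ≤ a * ‖e t‖ + c' * (H₁ * Real.exp (-(lamhat * t)) + H₂ * Real.exp (-(lam * t)))) :
    ∀ t ∈ Set.Icc tk (tk + ε), ‖e t‖ ≤ γ * Real.exp (-(lam * t)) := by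
  have halamhat : 0 < a + lamhat := by linarith
  have halam' : 0 < a + lam := by linarith
  set P₁ : ℝ := c' * H₁ / (a + lamhat) with hP₁def
  set P₂ : ℝ := c' * H₂ / (a + lam) with hP₂def
  have hP₁nn : 0 ≤ P₁ := div_nonneg (mul_nonneg hc' hH₁) halamhat.le
  have hP₂nn : 0 ≤ P₂ := div_nonneg (mul_nonneg hc' hH₂) halam'.le
  have hP₁mul : P₁ * (a + lamhat) = c' * H₁ := div_mul_cancel₀ _ halamhat.ne'
  have hP₂mul : P₂ * (a + lam) = c' * H₂ := div_mul_cancel₀ _ halam'.ne'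
  set A₁ : ℝ := P₁ * Real.exp ((lam - lamhat) * tk) with hA₁def
  have hA₁nn : 0 ≤ A₁ := mul_nonneg hP₁nn (Real.exp_pos _).le
  have hH₃ : H₃ = A₁ + P₂ := by
    rw [hH₃def, hA₁def, hP₁def, hP₂def]; field_simp
  have hH₃nn : 0 ≤ H₃ := by rw [hH₃]; exact add_nonneg hA₁nn hP₂nn
  have hβH₃ : 0 < β + H₃ := by linarith
  have hγH₃ : 0 < γ + H₃ := by linarith
  have hR1 : (1 : ℝ) ≤ (γ + H₃) / (β + H₃) := (one_le_div hβH₃).2 (by linarith)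
  have hεnn : 0 ≤ ε := by
    rw [hεdef]; exact div_nonneg (Real.log_nonneg hR1) halamhat.le
  have hexpε : Real.exp ((a + lamhat) * ε) = (γ + H₃) / (β + H₃) := by
    have h1 : (a + lamhat) * ε = Real.log ((γ + H₃) / (β + H₃)) := by
      rw [hεdef]; field_simp
    rw [h1, Real.exp_log (div_pos hγH₃ hβH₃)]
  set K : ℝ := β * Real.exp (-(lam * tk)) + P₁ * Real.exp (-(lamhat * tk))
      + P₂ * Real.exp (-(lam * tk)) with hKdef
  set B : ℝ → ℝ := fun t => K * Real.exp (a * t - a * tk) - P₁ * Real.exp (-(lamhat * t))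
      - P₂ * Real.exp (-(lam * t)) with hBdef
  have hBtk : B tk = β * Real.exp (-(lam * tk)) := by
    simp only [hBdef, hKdef, sub_self, Real.exp_zero]; ring
  have hBderiv : ∀ t, HasDerivAt B
      (a * B t + c' * (H₁ * Real.exp (-(lamhat * t)) + H₂ * Real.exp (-(lam * t)))) t := by
    intro t
    have h : HasDerivAt B (K * (a * Real.exp (a * t - a * tk)) - P₁ * (-lamhat * Real.exp (-(lamhat * t)))
        - P₂ * (-lam * Real.exp (-(lam * t)))) t := (((expDeriv1 a (a * tk) t).const_mul K).sub
      ((expDeriv2 lamhat t).const_mul P₁)).sub ((expDeriv2 lam t).const_mul P₂)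
    convert h using 1
    simp only [hBdef, hP₁def, hP₂def]
    field_simp
    ring
  -- Step A: Grönwall-type comparison with the exact boundary B
  have hA : ∀ t ∈ Set.Icc tk (tk + ε), ‖e t‖ ≤ B t := by
    have hcont : ContinuousOn e (Set.Icc tk (tk + ε)) :=
      fun x hx => (hderiv x hx).continuousWithinAt
    have hf' : ∀ x ∈ Set.Ico tk (tk + ε), HasDerivWithinAt e (e' x) (Set.Ici x) x := by
      intro x hx
      refine (hderiv x (Set.mem_Icc_of_Ico hx)).mono_of_mem_nhdsWithin ?_
      have h1 : Set.Ici x ∩ Set.Iio (tk + ε) ∈ nhdsWithin x (Set.Ici x) :=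
        inter_mem_nhdsWithin _ (Iio_mem_nhds hx.2)
      exact Filter.mem_of_superset h1 (fun y hy => ⟨hx.1.trans hy.1, hy.2.le⟩)
    intro t ht
    refine le_of_forall_pos_le_add ?_
    intro δ hδ
    set η : ℝ := δ / Real.exp ((a + 1) * ε) with hηdef
    have hη : 0 < η := div_pos hδ (Real.exp_pos _)
    have hBη : ∀ x : ℝ, HasDerivAt
        (fun x => B x + η * Real.exp ((a + 1) * x - (a + 1) * tk))
        ((a * B x + c' * (H₁ * Real.exp (-(lamhat * x)) + H₂ * Real.exp (-(lam * x))))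
          + η * ((a + 1) * Real.exp ((a + 1) * x - (a + 1) * tk))) x :=
      fun x => (hBderiv x).add ((expDeriv1 (a + 1) ((a + 1) * tk) x).const_mul η)
    have key : ∀ x ∈ Set.Icc tk (tk + ε),
        ‖e x‖ ≤ B x + η * Real.exp ((a + 1) * x - (a + 1) * tk) := by
      intro x hx
      refine image_norm_le_of_norm_deriv_right_lt_deriv_boundary hcont hf' ?_ hBη ?_ hx
      · have h1 : Real.exp ((a + 1) * tk - (a + 1) * tk) = 1 := by
          rw [sub_self, Real.exp_zero]
        rw [h1, hBtk]; linarith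
      · intro y hy hey
        have h1 := hbnd y (Set.mem_Icc_of_Ico hy)
        have hE : 0 < Real.exp ((a + 1) * y - (a + 1) * tk) := Real.exp_pos _
        have h2 : a * ‖e y‖ = a * B y + a * (η * Real.exp ((a + 1) * y - (a + 1) * tk)) := by
          rw [hey]; ring
        have h3 : 0 < η * Real.exp ((a + 1) * y - (a + 1) * tk) := mul_pos hη hE
        calc ‖e' y‖ ≤ a * ‖e y‖
              + c' * (H₁ * Real.exp (-(lamhat * y)) + H₂ * Real.exp (-(lam * y))) := h1
          _ < (a * B y + c' * (H₁ * Real.exp (-(lamhat * y)) + H₂ * Real.exp (-(lam * y))))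
              + η * ((a + 1) * Real.exp ((a + 1) * y - (a + 1) * tk)) := by
            rw [h2]; linarith [h3]
    have h2 := key t ht
    have h3 : η * Real.exp ((a + 1) * t - (a + 1) * tk) ≤ δ := by
      have h4 : (a + 1) * t - (a + 1) * tk ≤ (a + 1) * ε := by
        have := mul_le_mul_of_nonneg_left (show t - tk ≤ ε by linarith [ht.2])
          (by linarith : (0:ℝ) ≤ a + 1)
        linarith
      have h5 : Real.exp ((a + 1) * t - (a + 1) * tk) ≤ Real.exp ((a + 1) * ε) :=
        Real.exp_le_exp.2 h4
      calc η * Real.exp ((a + 1) * t - (a + 1) * tk) ≤ η * Real.exp ((a + 1) * ε) := by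
            exact mul_le_mul_of_nonneg_left h5 hη.le
        _ = δ := by rw [hηdef]; field_simp
    linarith
  -- Step B: the boundary stays below the threshold
  have hB2 : ∀ t ∈ Set.Icc tk (tk + ε), B t ≤ γ * Real.exp (-(lam * t)) := by
    intro t ht
    set s : ℝ := t - tk with hsdef
    have hs0 : 0 ≤ s := by rw [hsdef]; linarith [ht.1]
    have hsε : s ≤ ε := by rw [hsdef]; linarith [ht.2]
    set x : ℝ := (lamhat - lam) * s with hxdef
    have hx0 : 0 ≤ x := mul_nonneg (by linarith) hs0
    have hE1 : (1 : ℝ) ≤ Real.exp ((a + lam) * s) :=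
      Real.one_le_exp (mul_nonneg halam'.le hs0)
    have hE4 : Real.exp ((a + lamhat) * s) = Real.exp ((a + lam) * s) * Real.exp x := by
      rw [← Real.exp_add, hxdef]; ring_nf
    have hg1 : x + 1 ≤ Real.exp x := Real.add_one_le_exp x
    have hg2 : -x + 1 ≤ Real.exp (-x) := Real.add_one_le_exp (-x)
    have hE2 : Real.exp ((lam - lamhat) * s) = Real.exp (-x) := by
      rw [hxdef]; ring_nf
    have hA₁le : A₁ ≤ β + H₃ := by rw [hH₃]; linarith
    have hii : (β + H₃) * Real.exp ((a + lam) * s) - A₁ * Real.exp ((lam - lamhat) * s) - P₂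
        ≤ (β + H₃) * Real.exp ((a + lamhat) * s) - A₁ - P₂ := by
      rw [hE2, hE4]
      have hx1 : (1 : ℝ) ≤ Real.exp x := by linarith
      have t1 : A₁ * (1 - Real.exp (-x)) ≤ A₁ * x :=
        mul_le_mul_of_nonneg_left (by linarith) hA₁nn
      have t1b : A₁ * x ≤ (β + H₃) * x := mul_le_mul_of_nonneg_right hA₁le hx0
      have t2 : (β + H₃) * x ≤ (β + H₃) * (Real.exp x - 1) :=
        mul_le_mul_of_nonneg_left (by linarith) hβH₃.le
      have hp : 0 ≤ (β + H₃) * (Real.exp ((a + lam) * s) - 1) * (Real.exp x - 1) :=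
        mul_nonneg (mul_nonneg hβH₃.le (by linarith)) (by linarith)
      have t3 : (β + H₃) * (Real.exp x - 1)
          ≤ (β + H₃) * Real.exp ((a + lam) * s) * (Real.exp x - 1) := by linarith [hp]
      linarith [t1, t1b, t2, t3]
    have hE4le : Real.exp ((a + lamhat) * s) ≤ (γ + H₃) / (β + H₃) := by
      rw [← hexpε]
      exact Real.exp_le_exp.2 (mul_le_mul_of_nonneg_left hsε halamhat.le)
    have h5 : (β + H₃) * Real.exp ((a + lamhat) * s) ≤ γ + H₃ := by
      calc (β + H₃) * Real.exp ((a + lamhat) * s) ≤ (β + H₃) * ((γ + H₃) / (β + H₃)) := by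
            exact mul_le_mul_of_nonneg_left hE4le hβH₃.le
        _ = γ + H₃ := by field_simp
    have hφ : (β + H₃) * Real.exp ((a + lam) * s) - A₁ * Real.exp ((lam - lamhat) * s) - P₂
        ≤ γ := by
      have := hH₃; linarith [hii, h5]
    -- identity: B t = φ * exp (-(lam * t))
    have hmul : B t = ((β + H₃) * Real.exp ((a + lam) * s)
        - A₁ * Real.exp ((lam - lamhat) * s) - P₂) * Real.exp (-(lam * t)) := by
      have r1 : Real.exp (a * t - a * tk) = Real.exp (a * t) / Real.exp (a * tk) :=
        Real.exp_sub _ _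
      have r2 : Real.exp (-(lamhat * t)) = (Real.exp (lamhat * t))⁻¹ := Real.exp_neg _
      have r3 : Real.exp (-(lam * t)) = (Real.exp (lam * t))⁻¹ := Real.exp_neg _
      have r4 : Real.exp (-(lam * tk)) = (Real.exp (lam * tk))⁻¹ := Real.exp_neg _
      have r5 : Real.exp (-(lamhat * tk)) = (Real.exp (lamhat * tk))⁻¹ := Real.exp_neg _
      have r6 : Real.exp ((a + lam) * s)
          = Real.exp (a * t) * Real.exp (lam * t) / (Real.exp (a * tk) * Real.exp (lam * tk)) := by
        rw [hsdef, show (a + lam) * (t - tk) = (a * t + lam * t) - (a * tk + lam * tk) by ring,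
          Real.exp_sub, Real.exp_add, Real.exp_add]
      have r7 : Real.exp ((lam - lamhat) * s)
          = Real.exp (lam * t) * Real.exp (lamhat * tk)
            / (Real.exp (lamhat * t) * Real.exp (lam * tk)) := by
        rw [hsdef, show (lam - lamhat) * (t - tk)
            = (lam * t + lamhat * tk) - (lamhat * t + lam * tk) by ring,
          Real.exp_sub, Real.exp_add, Real.exp_add]
      have r8 : Real.exp ((lam - lamhat) * tk)
          = Real.exp (lam * tk) / Real.exp (lamhat * tk) := by
        rw [show (lam - lamhat) * tk = lam * tk - lamhat * tk by ring, Real.exp_sub]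
      simp only [hBdef, hKdef, hA₁def, hH₃, r1, r2, r3, r4, r5, r6, r7, r8]
      have n1 := Real.exp_ne_zero (a * t)
      have n2 := Real.exp_ne_zero (a * tk)
      have n3 := Real.exp_ne_zero (lam * t)
      have n4 := Real.exp_ne_zero (lam * tk)
      have n5 := Real.exp_ne_zero (lamhat * t)
      have n6 := Real.exp_ne_zero (lamhat * tk)
      field_simp
      ring
    rw [hmul]
    exact mul_le_mul_of_nonneg_right hφ (Real.exp_pos _).le
  intro t ht
  exact le_trans (hA t ht) (hB2 t ht)
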